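/- Let k ≥ 2, let x_1, …, x_k and u be words over A. Then binom_q(x_1⋯x_k, u) = Σ q^{Σ_{i=1}^{k-1} |u_i|·(|x_{i+1}⋯x_k| − |u_{i+1}⋯u_k|)} · binom_q(x_1,u_1)⋯binom_q(x_k,u_k), where the sum ranges over all factorizations u = u_1⋯u_k with u_i ∈ A* satisfying |u_{i+1}⋯u_k| ≤ |x_{i+1}⋯x_k| for all 1 ≤ i ≤ k−1 (all other terms vanish since some binom_q(x_j,u_j) is then 0). -/
import Mathlib


noncomputable def qbinAux {A : Type*} [DecidableEq A] : List A → List A → Polynomial ℕ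
  | _, [] => 1
  | [], _ :: _ => 0
  | a :: u, b :: v =>
      Polynomial.X ^ (v.length + 1) * qbinAux u (b :: v) +
        (if a = b then qbinAux u v else 0)

/-- The `q`-binomial coefficient `binom_q(u,v)` of two words. -/
noncomputable def qbin {A : Type*} [DecidableEq A] (u v : List A) : Polynomial ℕ :=
  qbinAux u.reverse v.reverse

section Aux

open Polynomial Finset List

variable {A : Type*} [DecidableEq A]

@[simp] lemma qbinAux_nil_right (u : List A) : qbinAux u [] = 1 := by cases u <;> rfl
@[simp] lemma qbinAux_nil_left (b : A) (v : List A) : qbinAux ([] : List A) (b::v) = 0 := rfl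
lemma qbinAux_cons (a b : A) (u v : List A) : qbinAux (a::u) (b::v) =
    X ^ (v.length+1) * qbinAux u (b::v) + (if a = b then qbinAux u v else 0) := rfl

lemma qbinAux_eq_zero : ∀ {u v : List A}, u.length < v.length → qbinAux u v = 0 := by
  intro u
  induction u with
  | nil => intro v h; cases v with
    | nil => simp at h
    | cons b v => simp
  | cons a u ih =>
    intro v h
    cases v with
    | nil => simp at h
    | cons b v =>
      rw [qbinAux_cons, ih (by simpa using Nat.lt_of_succ_lt h),
        ih (by simpa using h)]
      simp

lemma nat_exp1 {n m j : ℕ} (hj : j ≤ n) (hm : j < m) :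
    (n - j)*(m - j) + (j+1) = (n+1) + (n - j)*(m - (j+1)) := by
  obtain ⟨t, rfl⟩ := Nat.exists_eq_add_of_le hj
  obtain ⟨s, rfl⟩ := Nat.exists_eq_add_of_le hm
  simp only [show j + t - j = t from by omega, show j + 1 + s - j = 1 + s from by omega,
    show j + 1 + s - (j+1) = s from by omega]
  ring

lemma qbinAux_append (b a : List A) : ∀ v : List A,
    qbinAux (b ++ a) v = ∑ j ∈ Finset.range (v.length+1),
      X ^ ((v.length - j) * (b.length - j)) *
        (qbinAux a (v.drop j) * qbinAux b (v.take j)) := by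
  induction b with
  | nil =>
    intro v
    cases v with
    | nil => simp
    | cons d v' =>
      rw [Finset.sum_eq_single 0]
      · simp
      · intro j hj hj0
        obtain ⟨j, rfl⟩ := Nat.exists_eq_succ_of_ne_zero hj0
        simp [List.take_succ_cons]
      · simp
  | cons c b' IH =>
    intro v
    cases v with
    | nil => simp
    | cons d v' =>
      rw [List.cons_append, qbinAux_cons, IH (d::v'), IH v']
      set n := v'.length with hn
      set m := b'.length with hm
      have hlen : (d::v').length = n + 1 := rfl
      rw [hlen]
      have core : X^(n+1) * (∑ j ∈ Finset.range (n+1+1),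
            X^((n+1-j)*(m-j)) * (qbinAux a ((d::v').drop j) * qbinAux b' ((d::v').take j)))
          = (∑ j ∈ Finset.range (n+1), X^((n-j)*(m-j)+(j+1)) *
              (qbinAux a (v'.drop j) * qbinAux b' ((d::v').take (j+1))))
            + X^((n+1)*(m+1)) * (qbinAux a (d::v') * 1) := by
        rw [Finset.sum_range_succ', mul_add, Finset.mul_sum]
        congr 1
        · refine Finset.sum_congr rfl fun j hj => ?_
          rw [Finset.mem_range] at hj
          have hjn : j ≤ n := by omega
          simp only [List.drop_succ_cons, Nat.succ_sub_succ]
          by_cases hjm : j < m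
          · rw [nat_exp1 hjn hjm, pow_add]; ring
          · have h0 : qbinAux b' ((d::v').take (j+1)) = 0 := by
              refine qbinAux_eq_zero ?_
              rw [List.length_take]
              simp only [hlen]
              omega
            rw [h0]; ring
        · simp only [List.drop_nil, List.take_zero, List.drop_zero, qbinAux_nil_right,
            Nat.sub_zero]
          rw [show (n+1)*(m+1) = (n+1) + (n+1)*m from by ring, pow_add]
          ring
      have hterm : ∀ j ∈ Finset.range (n+1),
          X^((n+1-(j+1))*(m+1-(j+1))) *
            (qbinAux a ((d::v').drop (j+1)) * qbinAux (c::b') ((d::v').take (j+1)))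
          = X^((n-j)*(m-j)+(j+1)) * (qbinAux a (v'.drop j) * qbinAux b' ((d::v').take (j+1)))
            + (if c = d then X^((n-j)*(m-j)) * (qbinAux a (v'.drop j) * qbinAux b' (v'.take j))
               else 0) := by
        intro j hj
        rw [Finset.mem_range] at hj
        have hjn : j ≤ n := by omega
        rw [List.take_succ_cons, List.drop_succ_cons, qbinAux_cons, List.length_take]
        rw [min_eq_left (by omega : j ≤ v'.length)]
        simp only [Nat.succ_sub_succ]
        rw [← List.take_succ_cons]
        split_ifs
        · rw [pow_add]; ring
        · rw [pow_add]; ring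
      conv_rhs => rw [show (c::b').length = m+1 from rfl, Finset.sum_range_succ',
        Finset.sum_congr rfl hterm, Finset.sum_add_distrib]
      rw [core]
      simp only [Nat.sub_zero, List.take_zero, List.drop_zero, qbinAux_nil_right, mul_one,
        Nat.add_comm 1 b'.length]
      split_ifs <;>
        [skip; simp only [Finset.sum_const_zero, add_zero]] <;> abel

lemma qbin_nil_right (u : List A) : qbin u [] = 1 := by simp [qbin]

lemma qbin_eq_zero {x u : List A} (h : x.length < u.length) : qbin x u = 0 :=
  qbinAux_eq_zero (by simpa using h)

lemma qbin_append (x y u : List A) :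
    qbin (x ++ y) u = ∑ i ∈ Finset.range (u.length+1),
      X ^ (i * (y.length - (u.length - i))) * (qbin x (u.take i) * qbin y (u.drop i)) := by
  show qbinAux (x ++ y).reverse u.reverse = _
  rw [List.reverse_append, qbinAux_append, List.length_reverse, List.length_reverse,
    ← Finset.sum_range_reflect]
  refine Finset.sum_congr rfl fun i hi => ?_
  rw [Finset.mem_range] at hi
  have hi' : i ≤ u.length := by omega
  have h1 : u.length + 1 - 1 - i = u.length - i := by omega
  rw [h1]
  have h2 : u.length - (u.length - i) = i := by omega
  rw [h2]
  congr 1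
  rw [qbin, qbin, List.reverse_take, List.reverse_drop]

def facsF : ℕ → List A → Finset (List (List A))
  | 0, u => if u = [] then {([] : List (List A))} else ∅
  | k+1, u => (Finset.range (u.length+1)).biUnion fun j =>
      (facsF k (u.drop j)).image (u.take j :: ·)

lemma mem_facsF : ∀ (k : ℕ) (u : List A) (us : List (List A)),
    us ∈ facsF k u ↔ us.length = k ∧ us.flatten = u := by
  intro k
  induction k with
  | zero =>
    intro u us
    rw [show facsF 0 u = if u = [] then {([] : List (List A))} else ∅ from rfl]
    by_cases hu : u = []
    · subst hu
      rw [if_pos rfl]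
      simp only [Finset.mem_singleton]
      constructor
      · rintro rfl; simp
      · rintro ⟨h1, h2⟩; exact List.length_eq_zero_iff.mp h1
    · rw [if_neg hu]
      simp only [Finset.notMem_empty, false_iff, not_and]
      intro h1 h2
      exact hu (by rw [← h2, List.length_eq_zero_iff.mp h1]; rfl)
  | succ k ih =>
    intro u us
    simp only [facsF, Finset.mem_biUnion, Finset.mem_range, Finset.mem_image]
    constructor
    · rintro ⟨j, hj, us', hus', rfl⟩
      rw [ih] at hus'
      refine ⟨by simp [hus'.1], ?_⟩
      simp [hus'.2, List.take_append_drop]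
    · rintro ⟨hlen, hflat⟩
      cases us with
      | nil => simp at hlen
      | cons u0 us' =>
        have hu : u0 ++ us'.flatten = u := hflat
        refine ⟨u0.length, ?_, us', ?_, ?_⟩
        · have := congrArg List.length hu
          simp only [List.length_append] at this
          omega
        · rw [ih]
          refine ⟨by simpa using hlen, ?_⟩
          rw [← hu, List.drop_left]
        · rw [← hu, List.take_left]

lemma sum_facsF_succ (k : ℕ) (u : List A) (F : List (List A) → Polynomial ℕ) :
    ∑ us ∈ facsF (k+1) u, F us
      = ∑ j ∈ Finset.range (u.length+1), ∑ us' ∈ facsF k (u.drop j), F (u.take j :: us') := by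
  show ∑ us ∈ (Finset.range (u.length+1)).biUnion _, F us = _
  rw [Finset.sum_biUnion]
  · refine Finset.sum_congr rfl fun j hj => ?_
    exact Finset.sum_image fun a _ b _ h => by injection h
  · intro j1 h1 j2 h2 hne
    simp only [Finset.coe_range, Set.mem_Iio] at h1 h2
    refine Finset.disjoint_left.mpr fun us hus1 hus2 => ?_
    simp only [Finset.mem_image] at hus1 hus2
    obtain ⟨w1, _, rfl⟩ := hus1
    obtain ⟨w2, _, heq⟩ := hus2
    apply hne
    have hhead : u.take j2 = u.take j1 := by injection heq
    have := congrArg List.length hhead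
    simp only [List.length_take] at this
    omega

lemma flatten_len (l : List (List A)) :
    l.flatten.length = ∑ m ∈ Finset.range l.length, (l.getD m []).length := by
  induction l with
  | nil => simp
  | cons x l ih =>
    rw [List.flatten_cons, List.length_append, List.length_cons, Finset.sum_range_succ']
    simp only [List.getD_cons_succ, List.getD_cons_zero]
    rw [ih]; ring

lemma flatten_drop_len (l : List (List A)) (i : ℕ) :
    (l.drop i).flatten.length = ∑ m ∈ Finset.Ico i l.length, (l.getD m []).length := by
  rw [flatten_len, Finset.sum_Ico_eq_sum_range, List.length_drop]
  refine Finset.sum_congr rfl fun m _ => ?_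
  rw [show (l.drop i).getD m [] = l.getD (i+m) [] by
    simp [List.getD_eq_getElem?_getD, List.getElem?_drop]]

lemma exp_cons (x0 : List A) (xs' us' : List (List A)) (u0 : List A) :
    ∑ i ∈ Finset.range ((x0::xs').length - 1), ((u0::us').getD i []).length *
        (((x0::xs').drop (i+1)).flatten.length - (((u0::us').drop (i+1)).flatten.length))
    = u0.length * (xs'.flatten.length - us'.flatten.length)
      + ∑ i ∈ Finset.range (xs'.length - 1), (us'.getD i []).length *
          ((xs'.drop (i+1)).flatten.length - ((us'.drop (i+1)).flatten.length)) := by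
  simp only [List.length_cons, Nat.add_sub_cancel, List.drop_succ_cons]
  cases xs' with
  | nil => simp
  | cons x1 xs'' =>
    rw [List.length_cons, Finset.sum_range_succ']
    simp only [List.getD_cons_succ, List.getD_cons_zero, List.drop_zero,
      List.length_cons, Nat.add_sub_cancel]
    rw [add_comm]

lemma qbin_flatten : ∀ (k : ℕ) (xs : List (List A)) (u : List A), xs.length = k →
    qbin xs.flatten u = ∑ us ∈ facsF k u,
      X ^ (∑ i ∈ Finset.range (xs.length - 1), (us.getD i []).length *
            ((xs.drop (i+1)).flatten.length - ((us.drop (i+1)).flatten.length))) *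
        ∏ i ∈ Finset.range k, qbin (xs.getD i []) (us.getD i []) := by
  intro k
  induction k with
  | zero =>
    intro xs u h
    rw [List.length_eq_zero_iff.mp h]
    cases u with
    | nil =>
      rw [show facsF 0 ([] : List A) = {([] : List (List A))} from rfl]
      simp [qbin_nil_right]
    | cons a u' =>
      rw [show facsF 0 (a::u') = ∅ from if_neg (by simp), qbin_eq_zero (by simp)]
      simp
  | succ k ih =>
    intro xs u hlen
    obtain ⟨x0, xs', rfl⟩ : ∃ h t, xs = h :: t := by
      cases xs with
      | nil => simp at hlen
      | cons h t => exact ⟨h, t, rfl⟩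
    have hxs' : xs'.length = k := by simpa using hlen
    rw [show (x0::xs').flatten = x0 ++ xs'.flatten from rfl, qbin_append, sum_facsF_succ]
    refine Finset.sum_congr rfl fun j hj => ?_
    rw [Finset.mem_range] at hj
    rw [ih xs' (u.drop j) hxs', Finset.mul_sum, Finset.mul_sum]
    refine Finset.sum_congr rfl fun us' hus' => ?_
    obtain ⟨hul, huf⟩ := (mem_facsF _ _ _).mp hus'
    rw [exp_cons, Finset.prod_range_succ']
    simp only [List.getD_cons_succ, List.getD_cons_zero]
    have h1 : (u.take j).length = j := by rw [List.length_take]; omega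
    have h2 : us'.flatten.length = u.length - j := by rw [huf, List.length_drop]
    rw [h1, h2, hxs', pow_add]
    ring

end Aux

/-- The generalized `q`-Vandermonde identity: for `k ≥ 2` and words
`x₁, …, x_k` (given as a list `xs` of length `k`) and `u`,
`binom_q(x₁⋯x_k, u)` equals the sum, over all factorizations `u = u₁⋯u_k`
(given as lists `us` of length `k` with `us.flatten = u`) satisfying
`|u_{i+1}⋯u_k| ≤ |x_{i+1}⋯x_k|` for `1 ≤ i ≤ k-1`, of
`q^{Σ_{i=1}^{k-1} |u_i|(|x_{i+1}⋯x_k| - |u_{i+1}⋯u_k|)} ∏_{i=1}^{k} binom_q(x_i,u_i)`. -/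
theorem qbin_vandermonde_general (A : Type*) [Fintype A] [DecidableEq A]
    (k : ℕ) (hk : 2 ≤ k) (xs : List (List A)) (hxs : xs.length = k) (u : List A) :
    qbin xs.flatten u =
      ∑ᶠ us ∈ {us : List (List A) | us.length = k ∧ us.flatten = u ∧
          ∀ i ∈ Finset.Ico 1 k, ((us.drop i).flatten).length ≤ ((xs.drop i).flatten).length},
        (Polynomial.X : Polynomial ℕ) ^
            (∑ i ∈ Finset.Ico 1 k,
              (us.getD (i - 1) []).length *
                (((xs.drop i).flatten).length - ((us.drop i).flatten).length)) *
          ∏ i ∈ Finset.range k, qbin (xs.getD i []) (us.getD i []) := by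
  have h1 : ∑ᶠ us ∈ {us : List (List A) | us.length = k ∧ us.flatten = u ∧
          ∀ i ∈ Finset.Ico 1 k, ((us.drop i).flatten).length ≤ ((xs.drop i).flatten).length},
        (Polynomial.X : Polynomial ℕ) ^
            (∑ i ∈ Finset.Ico 1 k,
              (us.getD (i - 1) []).length *
                (((xs.drop i).flatten).length - ((us.drop i).flatten).length)) *
          ∏ i ∈ Finset.range k, qbin (xs.getD i []) (us.getD i [])
      = ∑ us ∈ facsF k u,
        (Polynomial.X : Polynomial ℕ) ^
            (∑ i ∈ Finset.Ico 1 k,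
              (us.getD (i - 1) []).length *
                (((xs.drop i).flatten).length - ((us.drop i).flatten).length)) *
          ∏ i ∈ Finset.range k, qbin (xs.getD i []) (us.getD i []) := by
    rw [← finsum_mem_coe_finset]
    refine finsum_mem_inter_support_eq' _ _ _ fun us hne => ?_
    constructor
    · rintro ⟨ha, hb, _⟩
      simp only [Finset.mem_coe, mem_facsF]
      exact ⟨ha, hb⟩
    · intro hmem
      simp only [Finset.mem_coe, mem_facsF] at hmem
      obtain ⟨ha, hb⟩ := hmem
      refine ⟨ha, hb, ?_⟩
      intro i hi
      by_contra hlt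
      push_neg at hlt
      apply hne
      have hsum : ∑ m ∈ Finset.Ico i k, ((xs.getD m []).length)
          < ∑ m ∈ Finset.Ico i k, ((us.getD m []).length) := by
        have e1 := flatten_drop_len xs i
        have e2 := flatten_drop_len us i
        rw [hxs] at e1; rw [ha] at e2
        omega
      obtain ⟨m, hm, hlt'⟩ : ∃ m ∈ Finset.Ico i k,
          (xs.getD m []).length < (us.getD m []).length := by
        by_contra hc
        push_neg at hc
        exact absurd (Finset.sum_le_sum hc) (by omega)
      have hz : qbin (xs.getD m []) (us.getD m []) = 0 := qbin_eq_zero hlt'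
      have hmr : m ∈ Finset.range k := by
        rw [Finset.mem_Ico] at hm; exact Finset.mem_range.mpr hm.2
      simp only [Function.mem_support, ne_eq, not_not]
      rw [Finset.prod_eq_zero hmr hz, mul_zero]
  rw [h1, qbin_flatten k xs u hxs]
  refine Finset.sum_congr rfl fun us _ => ?_
  congr 1
  congr 1
  rw [Finset.sum_Ico_eq_sum_range, hxs]
  refine Finset.sum_congr rfl fun i _ => ?_
  rw [show 1 + i - 1 = i from by omega, show 1 + i = i + 1 from by omega]
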